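/- arXiv:2002.10733 — 10 statements merged into one kernel-verified Lean document; each statement's English description precedes it below -/
import Mathlib

section
/- Let h, w, s, m be positive integers. For any image x, any block base classifier f with block size s, and any class c, if n_c(x) ≥ max_{c' ≠ c} ( n_{c'}(x) + [c > c'] ) + 2(m+s−1)², where [c > c'] equals 1 if c > c' and 0 otherwise, then for every image x' that is an m×m patch perturbation of x, the smoothed classifier satisfies g(x') = c. (Proposition 1, block smoothing certificate.) -/
/-- The `L × L` square region (with cyclic wraparound) whose upper-left corner is `q`. -/
def square {h w : ℕ} (L : ℕ) (q : ZMod h × ZMod w) : Set (ZMod h × ZMod w) :=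
  {p | ∃ u v : ℕ, u < L ∧ v < L ∧ p = (q.1 + (u : ZMod h), q.2 + (v : ZMod w))}

/-- The smoothed classifier: the least class maximizing the count vector `n`. -/
noncomputable def smoothed {C : Type*} [Fintype C] [LinearOrder C] [Nonempty C]
    (n : C → ℕ) : C :=
  (Finset.univ.filter fun c => ∀ c', n c' ≤ n c).min' (by
    obtain ⟨c, -, hc⟩ :=
      Finset.exists_max_image (Finset.univ : Finset C) n Finset.univ_nonempty
    refine ⟨c, ?_⟩
    simp only [Finset.mem_filter, Finset.mem_univ, true_and]
    exact fun c' => hc c' (Finset.mem_univ c'))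

/-- **Proposition 1 (block smoothing certificate).** -/
theorem block_smoothing_certificate
    (h w s m : ℕ) [NeZero h] [NeZero w] (hs : 0 < s) (hm : 0 < m)
    (P : Type*) (C : Type*) [Fintype C] [LinearOrder C] [Nonempty C]
    (f : (ZMod h × ZMod w → P) → (ZMod h × ZMod w) → C → Bool)
    (hf : ∀ (x x' : ZMod h × ZMod w → P) (ab : ZMod h × ZMod w),
      (∀ p ∈ square s ab, x p = x' p) → ∀ c, f x ab c = f x' ab c)
    (x : ZMod h × ZMod w → P) (c : C)
    (hcert : ∀ c' ≠ c,
      (Finset.univ.filter fun ab => f x ab c' = true).card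
          + (if c' < c then 1 else 0) + 2 * (m + s - 1) ^ 2
        ≤ (Finset.univ.filter fun ab => f x ab c = true).card)
    (x' : ZMod h × ZMod w → P)
    (hpatch : ∃ ij : ZMod h × ZMod w, ∀ p ∉ square m ij, x' p = x p) :
    smoothed (fun c0 => (Finset.univ.filter fun ab => f x' ab c0 = true).card) = c := by
  obtain ⟨ij, hij⟩ := hpatch
  set N := (m + s - 1) ^ 2 with hN
  set A : Finset (ZMod h × ZMod w) :=
    Finset.image (fun tt : Fin (m+s-1) × Fin (m+s-1) =>
      (ij.1 + ((tt.1 : ℕ) : ZMod h) - ((s-1 : ℕ) : ZMod h),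
       ij.2 + ((tt.2 : ℕ) : ZMod w) - ((s-1 : ℕ) : ZMod w))) Finset.univ with hA
  have hAcard : A.card ≤ N := by
    calc A.card ≤ (Finset.univ : Finset (Fin (m+s-1) × Fin (m+s-1))).card :=
          Finset.card_image_le
      _ = (m+s-1) * (m+s-1) := by simp
      _ = N := by rw [hN, sq]
  have hkey : ∀ ab ∉ A, ∀ c0, f x ab c0 = f x' ab c0 := by
    intro ab hab c0
    apply hf
    intro p hp
    refine (hij p ?_).symm
    intro hpm
    apply hab
    obtain ⟨u, v, hu, hv, hp_eq⟩ := hp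
    obtain ⟨u', v', hu', hv', hpm_eq⟩ := hpm
    have h1 : ab.1 + (u : ZMod h) = ij.1 + (u' : ZMod h) := by
      have := hp_eq ▸ hpm_eq
      exact congrArg Prod.fst this
    have h2 : ab.2 + (v : ZMod w) = ij.2 + (v' : ZMod w) := by
      have := hp_eq ▸ hpm_eq
      exact congrArg Prod.snd this
    refine Finset.mem_image.mpr ⟨(⟨u' + (s-1-u), by omega⟩, ⟨v' + (s-1-v), by omega⟩),
      Finset.mem_univ _, ?_⟩
    have hc1 : ((u' + (s-1-u) : ℕ) : ZMod h) = (u' : ZMod h) + ((s-1 : ℕ) : ZMod h) - (u : ZMod h) := by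
      have : u' + (s-1-u) = u' + (s-1) - u := by omega
      rw [this, Nat.cast_sub (by omega), Nat.cast_add]
    have hc2 : ((v' + (s-1-v) : ℕ) : ZMod w) = (v' : ZMod w) + ((s-1 : ℕ) : ZMod w) - (v : ZMod w) := by
      have : v' + (s-1-v) = v' + (s-1) - v := by omega
      rw [this, Nat.cast_sub (by omega), Nat.cast_add]
    apply Prod.ext
    · show ij.1 + _ - _ = ab.1
      rw [hc1]
      linear_combination h1.symm
    · show ij.2 + _ - _ = ab.2
      rw [hc2]
      linear_combination h2.symm
  have hle1 : ∀ c0, (Finset.univ.filter fun ab => f x' ab c0 = true).card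
      ≤ (Finset.univ.filter fun ab => f x ab c0 = true).card + N := by
    intro c0
    have hsub : (Finset.univ.filter fun ab => f x' ab c0 = true)
        ⊆ (Finset.univ.filter fun ab => f x ab c0 = true) ∪ A := by
      intro ab hab
      by_cases hA' : ab ∈ A
      · exact Finset.mem_union_right _ hA'
      · refine Finset.mem_union_left _ ?_
        simp only [Finset.mem_filter, Finset.mem_univ, true_and] at hab ⊢
        rw [hkey ab hA' c0]; exact hab
    calc _ ≤ ((Finset.univ.filter fun ab => f x ab c0 = true) ∪ A).card :=
          Finset.card_le_card hsub
      _ ≤ _ + A.card := Finset.card_union_le _ _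
      _ ≤ _ + N := by omega
  have hle2 : ∀ c0, (Finset.univ.filter fun ab => f x ab c0 = true).card
      ≤ (Finset.univ.filter fun ab => f x' ab c0 = true).card + N := by
    intro c0
    have hsub : (Finset.univ.filter fun ab => f x ab c0 = true)
        ⊆ (Finset.univ.filter fun ab => f x' ab c0 = true) ∪ A := by
      intro ab hab
      by_cases hA' : ab ∈ A
      · exact Finset.mem_union_right _ hA'
      · refine Finset.mem_union_left _ ?_
        simp only [Finset.mem_filter, Finset.mem_univ, true_and] at hab ⊢
        rw [← hkey ab hA' c0]; exact hab
    calc _ ≤ ((Finset.univ.filter fun ab => f x' ab c0 = true) ∪ A).card :=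
          Finset.card_le_card hsub
      _ ≤ _ + A.card := Finset.card_union_le _ _
      _ ≤ _ + N := by omega
  set n' : C → ℕ := fun c0 => (Finset.univ.filter fun ab => f x' ab c0 = true).card with hn'
  have hmain : ∀ c' ≠ c, n' c' + (if c' < c then 1 else 0) ≤ n' c := by
    intro c' hc'
    have := hcert c' hc'
    have h1 := hle1 c'
    have h2 := hle2 c
    simp only [hn']
    omega
  have hcS : c ∈ Finset.univ.filter fun c0 => ∀ c1, n' c1 ≤ n' c0 := by
    simp only [Finset.mem_filter, Finset.mem_univ, true_and]
    intro c1
    by_cases hc1 : c1 = c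
    · rw [hc1]
    · have := hmain c1 hc1; omega
  have hleast : ∀ c' ∈ (Finset.univ.filter fun c0 => ∀ c1, n' c1 ≤ n' c0), c ≤ c' := by
    intro c' hc'
    simp only [Finset.mem_filter, Finset.mem_univ, true_and] at hc'
    by_contra hlt
    push_neg at hlt
    have hne : c' ≠ c := ne_of_lt hlt
    have := hmain c' hne
    rw [if_pos hlt] at this
    have := hc' c
    omega
  unfold smoothed
  exact le_antisymm (Finset.min'_le _ c hcS) (Finset.le_min' _ _ c hleast)
end

section
/- Let h, w, s, m be positive integers. For any image x, any column base classifier f with band width s, and any class c, if n_c(x) ≥ max_{c' ≠ c} ( n_{c'}(x) + [c > c'] ) + 2(m+s−1), where [c > c'] equals 1 if c > c' and 0 otherwise, then for every image x' that is an m×m patch perturbation of x, the smoothed classifier satisfies g(x') = c. (Proposition 2, band/column smoothing certificate.) -/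
/-- The band (column) of width `s` (with cyclic wraparound) whose leftmost column is `b`. -/
def band {h w : ℕ} (s : ℕ) (b : ZMod w) : Set (ZMod h × ZMod w) :=
  {p | ∃ j : ℕ, j < s ∧ p.2 = b + (j : ZMod w)}

/-- **Proposition 2 (band/column smoothing certificate).** -/
theorem band_smoothing_certificate
    (h w s m : ℕ) [NeZero h] [NeZero w] (hs : 0 < s) (hm : 0 < m)
    (P : Type*) (C : Type*) [Fintype C] [LinearOrder C] [Nonempty C]
    (f : (ZMod h × ZMod w → P) → ZMod w → C → Bool)
    (hf : ∀ (x x' : ZMod h × ZMod w → P) (b : ZMod w),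
      (∀ p ∈ band (h := h) s b, x p = x' p) → ∀ c, f x b c = f x' b c)
    (x : ZMod h × ZMod w → P) (c : C)
    (hcert : ∀ c' ≠ c,
      (Finset.univ.filter fun b => f x b c' = true).card
          + (if c' < c then 1 else 0) + 2 * (m + s - 1)
        ≤ (Finset.univ.filter fun b => f x b c = true).card)
    (x' : ZMod h × ZMod w → P)
    (hpatch : ∃ ij : ZMod h × ZMod w, ∀ p ∉ square m ij, x' p = x p) :
    smoothed (fun c0 => (Finset.univ.filter fun b => f x' b c0 = true).card) = c := by
  classical
  obtain ⟨ij, hij⟩ := hpatch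
  set N := m + s - 1 with hN
  set D : Finset (ZMod w) :=
    Finset.image (fun k : ℕ => ij.2 + (k : ZMod w) - ((s - 1 : ℕ) : ZMod w))
      (Finset.range N) with hD
  have hDcard : D.card ≤ N := le_trans Finset.card_image_le (by simp)
  have hagree : ∀ b ∉ D, ∀ c0, f x' b c0 = f x b c0 := by
    intro b hb c0
    refine hf x' x b ?_ c0
    intro p hp
    refine hij p ?_
    intro hpsq
    apply hb
    obtain ⟨j, hj, hpj⟩ := hp
    obtain ⟨u, v, hu, hv, hpq⟩ := hpsq
    have h2 : b + (j : ZMod w) = ij.2 + (v : ZMod w) := by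
      rw [← hpj, hpq]
    have hjs : j ≤ s - 1 := by omega
    refine Finset.mem_image.mpr ⟨v + (s - 1 - j), Finset.mem_range.mpr (by omega), ?_⟩
    have hb' : b = ij.2 + (v : ZMod w) - (j : ZMod w) := by
      rw [← h2]; ring
    push_cast [Nat.cast_sub hjs]
    rw [hb']; ring
  have hle : ∀ c0, (Finset.univ.filter fun b => f x' b c0 = true).card ≤
      (Finset.univ.filter fun b => f x b c0 = true).card + N := by
    intro c0
    have hsub : (Finset.univ.filter fun b => f x' b c0 = true) ⊆
        ((Finset.univ.filter fun b => f x b c0 = true)) ∪ D := by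
      intro b hbmem
      by_cases hbD : b ∈ D
      · exact Finset.mem_union_right _ hbD
      · refine Finset.mem_union_left _ ?_
        simp only [Finset.mem_filter, Finset.mem_univ, true_and] at hbmem ⊢
        rw [← hagree b hbD c0]; exact hbmem
    calc (Finset.univ.filter fun b => f x' b c0 = true).card
        ≤ ((Finset.univ.filter fun b => f x b c0 = true) ∪ D).card :=
          Finset.card_le_card hsub
      _ ≤ (Finset.univ.filter fun b => f x b c0 = true).card + D.card :=
          Finset.card_union_le _ _
      _ ≤ _ := by omega
  have hge : ∀ c0, (Finset.univ.filter fun b => f x b c0 = true).card ≤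
      (Finset.univ.filter fun b => f x' b c0 = true).card + N := by
    intro c0
    have hsub : (Finset.univ.filter fun b => f x b c0 = true) ⊆
        ((Finset.univ.filter fun b => f x' b c0 = true)) ∪ D := by
      intro b hbmem
      by_cases hbD : b ∈ D
      · exact Finset.mem_union_right _ hbD
      · refine Finset.mem_union_left _ ?_
        simp only [Finset.mem_filter, Finset.mem_univ, true_and] at hbmem ⊢
        rw [hagree b hbD c0]; exact hbmem
    calc (Finset.univ.filter fun b => f x b c0 = true).card
        ≤ ((Finset.univ.filter fun b => f x' b c0 = true) ∪ D).card :=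
          Finset.card_le_card hsub
      _ ≤ (Finset.univ.filter fun b => f x' b c0 = true).card + D.card :=
          Finset.card_union_le _ _
      _ ≤ _ := by omega
  set n' : C → ℕ := fun c0 => (Finset.univ.filter fun b => f x' b c0 = true).card with hn'
  have hgap : ∀ c' ≠ c, n' c' + (if c' < c then 1 else 0) ≤ n' c := by
    intro c' hc'
    have h1 := hcert c' hc'
    have h2 := hle c'
    have h3 := hge c
    simp only [hn']
    omega
  have hcmax : ∀ c', n' c' ≤ n' c := by
    intro c'
    by_cases hc' : c' = c
    · simp [hc']
    · have := hgap c' hc'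
      omega
  have hcmem : c ∈ Finset.univ.filter fun c0 => ∀ c', n' c' ≤ n' c0 := by
    simp only [Finset.mem_filter, Finset.mem_univ, true_and]
    exact hcmax
  unfold smoothed
  apply le_antisymm
  · exact Finset.min'_le _ _ hcmem
  · apply Finset.le_min'
    intro y hy
    simp only [Finset.mem_filter, Finset.mem_univ, true_and] at hy
    by_contra hlt
    push_neg at hlt
    have hne : y ≠ c := ne_of_lt hlt
    have := hgap y hne
    simp only [if_pos hlt] at this
    have := hy c
    omega
end

section
/- Let h, w, s, m be positive integers with m + s − 1 ≤ h and m + s − 1 ≤ w. For every (i,j) ∈ ZMod h × ZMod w, the set of positions (a,b) ∈ ZMod h × ZMod w for which the block B(a,b) = {(a+u, b+v) : 0 ≤ u,v < s} intersects the patch Q(i,j) = {(i+u, j+v) : 0 ≤ u,v < m} has exactly (m + s − 1)² elements. (Two-dimensional wraparound intersection count used in the proof of Proposition 1.) -/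
/-- The `L × L` square region (with cyclic wraparound in each coordinate) whose
upper-left corner is `q`, as a finite set of positions. -/
def squareF {h w : ℕ} [NeZero h] [NeZero w] (L : ℕ) (q : ZMod h × ZMod w) :
    Finset (ZMod h × ZMod w) :=
  ((Finset.range L) ×ˢ (Finset.range L)).image
    fun uv : ℕ × ℕ => (q.1 + (uv.1 : ZMod h), q.2 + (uv.2 : ZMod w))

lemma mem_squareF {h w : ℕ} [NeZero h] [NeZero w] (L : ℕ) (q x : ZMod h × ZMod w) :
    x ∈ squareF L q ↔ ∃ u < L, ∃ v < L,
      x = (q.1 + (u : ZMod h), q.2 + (v : ZMod w)) := by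
  simp only [squareF, Finset.mem_image, Finset.mem_product, Finset.mem_range, Prod.exists]
  constructor
  · rintro ⟨u, v, ⟨hu, hv⟩, rfl⟩; exact ⟨u, hu, v, hv, rfl⟩
  · rintro ⟨u, hu, v, hv, rfl⟩; exact ⟨u, v, ⟨hu, hv⟩, rfl⟩

lemma natCast_inj_of_lt {n : ℕ} [NeZero n] {a b : ℕ} (ha : a < n) (hb : b < n)
    (hab : (a : ZMod n) = b) : a = b := by
  have := congrArg ZMod.val hab
  rwa [ZMod.val_cast_of_lt ha, ZMod.val_cast_of_lt hb] at this

lemma oneD {n : ℕ} [NeZero n] (s m : ℕ) (hs : 0 < s) (hm : 0 < m) (a i : ZMod n) :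
    (∃ u < s, ∃ u' < m, a + (u : ZMod n) = i + (u' : ZMod n)) ↔
    ∃ t < m + s - 1, a = i - ((s - 1 : ℕ) : ZMod n) + (t : ZMod n) := by
  constructor
  · rintro ⟨u, hu, u', hu', he⟩
    refine ⟨u' + (s - 1 - u), by omega, ?_⟩
    have h1 : ((u' + (s - 1 - u) : ℕ) : ZMod n)
        = (u' : ZMod n) + ((s - 1 : ℕ) : ZMod n) - (u : ZMod n) := by
      have : s - 1 - u + u = s - 1 := by omega
      push_cast [show (s - 1 - u : ℕ) = (s-1) - u from rfl]
      rw [Nat.cast_sub (by omega : u ≤ s - 1)]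
      ring
    rw [h1]
    linear_combination he
  · rintro ⟨t, ht, rfl⟩
    by_cases hts : t < s
    · refine ⟨s - 1 - t, by omega, 0, hm, ?_⟩
      rw [Nat.cast_sub (by omega : t ≤ s - 1), Nat.cast_zero]
      ring
    · refine ⟨0, hs, t - (s - 1), by omega, ?_⟩
      rw [Nat.cast_sub (by omega : s - 1 ≤ t), Nat.cast_zero]
      ring

/-- **Two-dimensional wraparound intersection count.** For `m + s - 1 ≤ h` and
`m + s - 1 ≤ w`, exactly `(m + s - 1)²` positions `(a,b)` give an `s × s` block
intersecting the `m × m` patch at `(i,j)`. -/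
theorem block_patch_intersection_count
    (h w s m : ℕ) [NeZero h] [NeZero w] (hs : 0 < s) (hm : 0 < m)
    (hmh : m + s - 1 ≤ h) (hmw : m + s - 1 ≤ w)
    (ij : ZMod h × ZMod w) :
    (Finset.univ.filter fun ab : ZMod h × ZMod w =>
        (squareF s ab ∩ squareF m ij).Nonempty).card = (m + s - 1) ^ 2 := by
  have key : (Finset.univ.filter fun ab : ZMod h × ZMod w =>
        (squareF s ab ∩ squareF m ij).Nonempty)
      = squareF (m + s - 1) (ij.1 - ((s - 1 : ℕ) : ZMod h),
          ij.2 - ((s - 1 : ℕ) : ZMod w)) := by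
    ext ab
    simp only [Finset.mem_filter, Finset.mem_univ, true_and, mem_squareF]
    constructor
    · rintro ⟨x, hx⟩
      rw [Finset.mem_inter, mem_squareF, mem_squareF] at hx
      obtain ⟨⟨u, hu, v, hv, rfl⟩, u', hu', v', hv', hx2⟩ := hx
      have e1 : ab.1 + (u : ZMod h) = ij.1 + (u' : ZMod h) := congrArg Prod.fst hx2
      have e2 : ab.2 + (v : ZMod w) = ij.2 + (v' : ZMod w) := congrArg Prod.snd hx2
      obtain ⟨t1, ht1, he1⟩ := (oneD s m hs hm ab.1 ij.1).mp ⟨u, hu, u', hu', e1⟩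
      obtain ⟨t2, ht2, he2⟩ := (oneD s m hs hm ab.2 ij.2).mp ⟨v, hv, v', hv', e2⟩
      exact ⟨t1, ht1, t2, ht2, by rw [Prod.ext_iff]; exact ⟨he1, he2⟩⟩
    · rintro ⟨t1, ht1, t2, ht2, hab⟩
      have he1 : ab.1 = ij.1 - ((s - 1 : ℕ) : ZMod h) + (t1 : ZMod h) :=
        congrArg Prod.fst hab
      have he2 : ab.2 = ij.2 - ((s - 1 : ℕ) : ZMod w) + (t2 : ZMod w) :=
        congrArg Prod.snd hab
      obtain ⟨u, hu, u', hu', e1⟩ := (oneD s m hs hm ab.1 ij.1).mpr ⟨t1, ht1, he1⟩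
      obtain ⟨v, hv, v', hv', e2⟩ := (oneD s m hs hm ab.2 ij.2).mpr ⟨t2, ht2, he2⟩
      refine ⟨(ab.1 + u, ab.2 + v), ?_⟩
      rw [Finset.mem_inter, mem_squareF, mem_squareF]
      exact ⟨⟨u, hu, v, hv, rfl⟩, u', hu', v', hv', by rw [Prod.ext_iff]; exact ⟨e1, e2⟩⟩
  rw [key]
  rw [squareF, Finset.card_image_of_injOn, Finset.card_product, Finset.card_range, sq]
  rintro ⟨u1, v1⟩ h1 ⟨u2, v2⟩ h2 he
  simp only [Finset.mem_coe, Finset.mem_product, Finset.mem_range] at h1 h2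
  have e1 := congrArg Prod.fst he
  have e2 := congrArg Prod.snd he
  simp only at e1 e2
  have := natCast_inj_of_lt (n := h) (lt_of_lt_of_le h1.1 hmh) (lt_of_lt_of_le h2.1 hmh)
    (by exact add_left_cancel e1)
  have := natCast_inj_of_lt (n := w) (lt_of_lt_of_le h1.2 hmw) (lt_of_lt_of_le h2.2 hmw)
    (by exact add_left_cancel e2)
  simp_all
end

section
/- Let h, w, s, m be positive integers. For any image x, any block base classifier f with block size s, any image x' that is an m×m patch perturbation of x, and every class c, the class counts satisfy |n_c(x) − n_c(x')| ≤ (m + s − 1)² (as integers). (Stability of block-smoothing counts, Equation 11 in the appendix.) -/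
lemma zmod_shift_aux (n : ℕ) (a b : ZMod n) (u u' s m : ℕ) (hu : u < s) (hu' : u' < m)
    (heq : a + (u : ZMod n) = b + (u' : ZMod n)) :
    ∃ k < m + s - 1, a = b + (k : ZMod n) - ((s - 1 : ℕ) : ZMod n) := by
  refine ⟨u' + (s - 1) - u, by omega, ?_⟩
  have hnat : (u' + (s - 1) - u) + u = u' + (s - 1) := by omega
  have hcast : ((u' + (s - 1) - u : ℕ) : ZMod n) + (u : ZMod n)
      = (u' : ZMod n) + ((s - 1 : ℕ) : ZMod n) := by
    exact_mod_cast congrArg (Nat.cast : ℕ → ZMod n) hnat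
  linear_combination heq - hcast

/-- **Stability of block-smoothing counts (Equation 11).** If `x'` is an `m × m` patch
perturbation of `x`, then for every class `c` the block-smoothing class counts of `x`
and `x'` differ by at most `(m + s - 1)²`. -/
theorem block_counts_stability
    (h w s m : ℕ) [NeZero h] [NeZero w] (hs : 0 < s) (hm : 0 < m)
    (P : Type*) (C : Type*) [Fintype C] [LinearOrder C] [Nonempty C]
    (f : (ZMod h × ZMod w → P) → (ZMod h × ZMod w) → C → Bool)
    (hf : ∀ (x x' : ZMod h × ZMod w → P) (ab : ZMod h × ZMod w),
      (∀ p ∈ square s ab, x p = x' p) → ∀ c, f x ab c = f x' ab c)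
    (x x' : ZMod h × ZMod w → P)
    (hpatch : ∃ ij : ZMod h × ZMod w, ∀ p ∉ square m ij, x' p = x p)
    (c : C) :
    |((Finset.univ.filter fun ab => f x ab c = true).card : ℤ)
        - ((Finset.univ.filter fun ab => f x' ab c = true).card : ℤ)|
      ≤ ((m + s - 1) ^ 2 : ℤ) := by
  obtain ⟨ij, hij⟩ := hpatch
  set A := Finset.univ.filter fun ab => f x ab c = true with hA
  set B := Finset.univ.filter fun ab => f x' ab c = true with hB
  set D : Finset (ZMod h × ZMod w) :=
    ((Finset.range (m + s - 1)) ×ˢ (Finset.range (m + s - 1))).image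
      (fun kl => (ij.1 + (kl.1 : ZMod h) - ((s - 1 : ℕ) : ZMod h),
                  ij.2 + (kl.2 : ZMod w) - ((s - 1 : ℕ) : ZMod w))) with hD
  have hDcard : (D.card : ℤ) ≤ ((m + s - 1) ^ 2 : ℤ) := by
    have := Finset.card_image_le (s := (Finset.range (m + s - 1)) ×ˢ (Finset.range (m + s - 1)))
      (f := fun kl : ℕ × ℕ => (ij.1 + (kl.1 : ZMod h) - ((s - 1 : ℕ) : ZMod h),
                  ij.2 + (kl.2 : ZMod w) - ((s - 1 : ℕ) : ZMod w)))
    rw [Finset.card_product, Finset.card_range] at this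
    have h' : D.card ≤ (m + s - 1) ^ 2 := by rw [hD]; nlinarith [this]
    have h'' : (D.card : ℤ) ≤ ((m + s - 1 : ℕ) : ℤ) ^ 2 := by exact_mod_cast h'
    have he : ((m + s - 1 : ℕ) : ℤ) = (m : ℤ) + s - 1 := by omega
    rw [he] at h''
    exact h''
  -- key: if f differs at ab, then ab ∈ D
  have key : ∀ ab : ZMod h × ZMod w, f x ab c ≠ f x' ab c → ab ∈ D := by
    intro ab hne
    by_contra hD'
    -- there is a point in square s ab where x ≠ x'
    have : ∃ p ∈ square s ab, x p ≠ x' p := by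
      by_contra hall
      push_neg at hall
      exact hne (hf x x' ab hall c)
    obtain ⟨p, hpsq, hpne⟩ := this
    have hpm : p ∈ square m ij := by
      by_contra hpm
      exact hpne ((hij p hpm).symm)
    obtain ⟨u, v, hu, hv, hp1⟩ := hpsq
    obtain ⟨u', v', hu', hv', hp2⟩ := hpm
    rw [hp1] at hp2
    have h1 : ab.1 + (u : ZMod h) = ij.1 + (u' : ZMod h) := congrArg Prod.fst hp2
    have h2 : ab.2 + (v : ZMod w) = ij.2 + (v' : ZMod w) := congrArg Prod.snd hp2
    obtain ⟨k, hk, hk2⟩ := zmod_shift_aux h ab.1 ij.1 u u' s m hu hu' h1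
    obtain ⟨l, hl, hl2⟩ := zmod_shift_aux w ab.2 ij.2 v v' s m hv hv' h2
    apply hD'
    rw [hD]
    apply Finset.mem_image.mpr
    exact ⟨(k, l), by simp [Finset.mem_product, hk, hl], by
      simp only []
      rw [← hk2, ← hl2]⟩
  have hAB : A ⊆ B ∪ D := by
    intro ab hab
    by_cases hd : ab ∈ D
    · exact Finset.mem_union_right _ hd
    · apply Finset.mem_union_left
      rw [hA, Finset.mem_filter] at hab
      rw [hB, Finset.mem_filter]
      refine ⟨Finset.mem_univ _, ?_⟩
      by_contra hcon
      exact hd (key ab (by rw [hab.2]; exact fun e => hcon e.symm))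
  have hBA : B ⊆ A ∪ D := by
    intro ab hab
    by_cases hd : ab ∈ D
    · exact Finset.mem_union_right _ hd
    · apply Finset.mem_union_left
      rw [hB, Finset.mem_filter] at hab
      rw [hA, Finset.mem_filter]
      refine ⟨Finset.mem_univ _, ?_⟩
      by_contra hcon
      exact hd (key ab (by rw [hab.2]; exact hcon))
  have c1 : A.card ≤ B.card + D.card :=
    le_trans (Finset.card_le_card hAB) (Finset.card_union_le _ _)
  have c2 : B.card ≤ A.card + D.card :=
    le_trans (Finset.card_le_card hBA) (Finset.card_union_le _ _)
  rw [abs_sub_le_iff]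
  constructor
  · have : (A.card : ℤ) ≤ B.card + D.card := by exact_mod_cast c1
    linarith
  · have : (B.card : ℤ) ≤ A.card + D.card := by exact_mod_cast c2
    linarith
end

section
/- Let h, w, s, m be positive integers. For any image x, any column base classifier f with band width s, any image x' that is an m×m patch perturbation of x, and every class c, the class counts satisfy |n_c(x) − n_c(x')| ≤ m + s − 1 (as integers). (Stability of column-smoothing counts, Equation 12 in the appendix.) -/
/-- **Stability of column-smoothing counts (Equation 12).** If `x'` is an `m × m` patch
perturbation of `x`, then for every class `c` the column-smoothing class counts of `x`
and `x'` differ by at most `m + s - 1`. -/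
theorem column_counts_stability
    (h w s m : ℕ) [NeZero h] [NeZero w] (hs : 0 < s) (hm : 0 < m)
    (P : Type*) (C : Type*) [Fintype C] [LinearOrder C] [Nonempty C]
    (f : (ZMod h × ZMod w → P) → ZMod w → C → Bool)
    (hf : ∀ (x x' : ZMod h × ZMod w → P) (b : ZMod w),
      (∀ p ∈ band (h := h) s b, x p = x' p) → ∀ c, f x b c = f x' b c)
    (x x' : ZMod h × ZMod w → P)
    (hpatch : ∃ ij : ZMod h × ZMod w, ∀ p ∉ square m ij, x' p = x p)
    (c : C) :
    |((Finset.univ.filter fun b => f x b c = true).card : ℤ)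
        - ((Finset.univ.filter fun b => f x' b c = true).card : ℤ)|
      ≤ ((m : ℤ) + (s : ℤ) - 1) := by
  classical
  obtain ⟨ij, hij⟩ := hpatch
  set B : Finset (ZMod w) :=
    (Finset.range (m + s - 1)).image
      (fun k : ℕ => ij.2 - ((s - 1 : ℕ) : ZMod w) + (k : ZMod w)) with hB
  have hBcard : B.card ≤ m + s - 1 := by
    calc B.card ≤ (Finset.range (m + s - 1)).card := Finset.card_image_le
      _ = m + s - 1 := Finset.card_range _
  have hagree : ∀ b : ZMod w, b ∉ B → f x b c = f x' b c := by
    intro b hb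
    apply hf
    intro p hp
    by_contra hne
    have hpsq : p ∈ square m ij := by
      by_contra hns
      exact hne ((hij p hns).symm)
    obtain ⟨t, ht, hpt⟩ := hp
    obtain ⟨u, v, hu, hv, hpe⟩ := hpsq
    apply hb
    rw [hB]
    refine Finset.mem_image.mpr ⟨v + (s - 1 - t), ?_, ?_⟩
    · simp only [Finset.mem_range]; omega
    · have hp2 : b + (t : ZMod w) = ij.2 + (v : ZMod w) := by
        rw [← hpt, hpe]
      have h1 : t ≤ s - 1 := by omega
      have hcast : ((v + (s - 1 - t) : ℕ) : ZMod w)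
          = (v : ZMod w) + ((s - 1 : ℕ) : ZMod w) - (t : ZMod w) := by
        push_cast [Nat.cast_sub h1]
        ring
      rw [hcast]
      have hb2 : b = ij.2 + (v : ZMod w) - (t : ZMod w) := by
        rw [← hp2]; ring
      rw [hb2]; ring
  set A := Finset.univ.filter fun b => f x b c = true with hA
  set A' := Finset.univ.filter fun b => f x' b c = true with hA'
  have key : ∀ a : ZMod w, a ∉ B → (a ∈ A ↔ a ∈ A') := by
    intro a ha
    simp [hA, hA', hagree a ha]
  have h1 : A.card ≤ A'.card + B.card := by
    have hsub : A ⊆ A' ∪ B := by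
      intro a ha
      by_cases hab : a ∈ B
      · exact Finset.mem_union_right _ hab
      · exact Finset.mem_union_left _ ((key a hab).mp ha)
    calc A.card ≤ (A' ∪ B).card := Finset.card_le_card hsub
      _ ≤ A'.card + B.card := Finset.card_union_le _ _
  have h2 : A'.card ≤ A.card + B.card := by
    have hsub : A' ⊆ A ∪ B := by
      intro a ha
      by_cases hab : a ∈ B
      · exact Finset.mem_union_right _ hab
      · exact Finset.mem_union_left _ ((key a hab).mpr ha)
    calc A'.card ≤ (A ∪ B).card := Finset.card_le_card hsub
      _ ≤ A.card + B.card := Finset.card_union_le _ _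
  rw [abs_sub_le_iff]
  constructor <;> push_cast <;> omega
end

section
/- Let C be a finite nonempty linearly ordered type, let n, n' : C → ℕ, and let Δ be a natural number such that |(n c : ℤ) − (n' c : ℤ)| ≤ Δ for every c ∈ C. If some class c satisfies n c ≥ n c' + [c > c'] + 2Δ for every c' ≠ c, where [c > c'] equals 1 if c > c' and 0 otherwise, then c is the least element of C attaining the maximum value of n'. (Abstract de-randomized smoothing certificate with deterministic tie-breaking toward smaller-indexed classes, underlying Propositions 1 and 2.) -/
/-- **Abstract de-randomized smoothing certificate.** If the counts `n` and `n'` differ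
by at most `Δ` in each class, and class `c` beats every other class `c'` in `n` by margin
`2Δ` (plus `1` when `c > c'`, because ties are broken toward smaller classes), then `c`
is the least class attaining the maximum of `n'`. -/
theorem derandomized_smoothing_certificate
    {C : Type*} [Fintype C] [LinearOrder C] [Nonempty C]
    (n n' : C → ℕ) (Δ : ℕ)
    (hΔ : ∀ c, |(n c : ℤ) - (n' c : ℤ)| ≤ (Δ : ℤ))
    (c : C)
    (hc : ∀ c' ≠ c, n c' + (if c' < c then 1 else 0) + 2 * Δ ≤ n c) :
    smoothed n' = c := by
  have key : ∀ c' ≠ c, (n' c' : ℤ) + (if c' < c then 1 else 0) ≤ (n' c : ℤ) := by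
    intro c' hc'
    have h1 := abs_le.mp (hΔ c)
    have h2 := abs_le.mp (hΔ c')
    have h3 := hc c' hc'
    have h3' : (n c' : ℤ) + (if c' < c then 1 else 0) + 2 * Δ ≤ (n c : ℤ) := by
      have := (Nat.cast_le (α := ℤ)).mpr h3
      push_cast at this ⊢
      split_ifs at this ⊢ <;> linarith
    linarith [h1.1, h1.2, h2.1, h2.2]
  have hmax : ∀ c', n' c' ≤ n' c := by
    intro c'
    by_cases h : c' = c
    · simp [h]
    · have := key c' h
      have : (n' c' : ℤ) ≤ (n' c : ℤ) := by split_ifs at this <;> linarith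
      exact_mod_cast this
  have hmem : c ∈ Finset.univ.filter fun d => ∀ c', n' c' ≤ n' d := by
    simp only [Finset.mem_filter, Finset.mem_univ, true_and]; exact hmax
  unfold smoothed
  apply le_antisymm (Finset.min'_le _ _ hmem)
  apply Finset.le_min'
  intro y hy
  by_contra h
  push_neg at h
  have hyc : y ≠ c := ne_of_lt h
  have := key y hyc
  rw [if_pos h] at this
  simp only [Finset.mem_filter, Finset.mem_univ, true_and] at hy
  have := hy c
  have : (n' c : ℤ) ≤ (n' y : ℤ) := by exact_mod_cast this
  linarith
end

section
/- Let w, s, m be positive integers with m + s − 1 ≤ w, and fix a patch column location i ∈ ZMod w. If a band position x is drawn uniformly at random from ZMod w, then the probability that the cyclic interval I_s(x) of length s at x intersects the cyclic interval I_m(i) of length m at i equals (m + s − 1) / w, and this probability is strictly less than 2·max(m, s) / w. (Equation 2: Δ_col = (m+s−1)/w < 2·max(hm, k)/(hw) with k = sh retained pixels.) -/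
/-- The cyclic interval of length `L` starting at `i` in `ZMod w`. -/
def cycInterval {w : ℕ} [NeZero w] (L : ℕ) (i : ZMod w) : Finset (ZMod w) :=
  (Finset.range L).image fun u : ℕ => i + (u : ZMod w)

lemma mem_cycInterval {w : ℕ} [NeZero w] {L : ℕ} {i x : ZMod w} :
    x ∈ cycInterval L i ↔ ∃ u < L, x = i + (u : ZMod w) := by
  simp [cycInterval, eq_comm]

lemma card_cycInterval {w : ℕ} [NeZero w] {L : ℕ} (hL : L ≤ w) (i : ZMod w) :
    (cycInterval L i).card = L := by
  rw [cycInterval, Finset.card_image_of_injOn, Finset.card_range]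
  intro a ha b hb hab
  simp only [Finset.mem_coe, Finset.mem_range] at ha hb
  have : (a : ZMod w) = (b : ZMod w) := by
    have := add_left_cancel hab
    exact this
  rw [ZMod.natCast_eq_natCast_iff'] at this
  rwa [Nat.mod_eq_of_lt (lt_of_lt_of_le ha hL), Nat.mod_eq_of_lt (lt_of_lt_of_le hb hL)] at this

lemma band_set_eq {w s m : ℕ} [NeZero w] (hs : 0 < s) (hm : 0 < m) (i : ZMod w) :
    {x : ZMod w | (cycInterval s x ∩ cycInterval m i).Nonempty}
      = ↑(cycInterval (m + s - 1) (i - ((s - 1 : ℕ) : ZMod w))) := by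
  ext x
  simp only [Set.mem_setOf_eq, Finset.coe_mem, Finset.mem_coe, mem_cycInterval]
  constructor
  · rintro ⟨y, hy⟩
    rw [Finset.mem_inter, mem_cycInterval, mem_cycInterval] at hy
    obtain ⟨⟨u, hu, hyu⟩, v, hv, hyv⟩ := hy
    refine ⟨(s - 1 - u) + v, ?_, ?_⟩
    · have : s - 1 - u ≤ s - 1 := Nat.sub_le _ _
      omega
    · have hxy : x = i + (v : ZMod w) - (u : ZMod w) := by
        linear_combination hyu.symm.trans hyv
      rw [hxy]
      have hcast : ((s - 1 - u : ℕ) : ZMod w) = ((s - 1 : ℕ) : ZMod w) - (u : ZMod w) := by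
        rw [Nat.cast_sub (by omega)]
      push_cast [hcast]
      ring
  · rintro ⟨t, ht, hx⟩
    rcases le_or_gt t (s - 1) with h | h
    · refine ⟨x + ((s - 1 - t : ℕ) : ZMod w), Finset.mem_inter.2 ⟨?_, ?_⟩⟩
      · exact mem_cycInterval.2 ⟨s - 1 - t, by omega, rfl⟩
      · refine mem_cycInterval.2 ⟨0, hm, ?_⟩
        rw [hx]
        have hcast : ((s - 1 - t : ℕ) : ZMod w) = ((s - 1 : ℕ) : ZMod w) - (t : ZMod w) := by
          rw [Nat.cast_sub h]
        rw [hcast]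
        push_cast
        ring
    · refine ⟨x, Finset.mem_inter.2 ⟨?_, ?_⟩⟩
      · exact mem_cycInterval.2 ⟨0, hs, by push_cast; ring⟩
      · refine mem_cycInterval.2 ⟨t - (s - 1), by omega, ?_⟩
        rw [hx]
        have hcast : ((t - (s - 1) : ℕ) : ZMod w) = (t : ZMod w) - ((s - 1 : ℕ) : ZMod w) := by
          rw [Nat.cast_sub (by omega)]
        rw [hcast]
        ring

/-- **Equation 2 (band/column smoothing intersection probability).** For a uniformly
random band position `x`, the probability that the width-`s` band intersects the
width-`m` patch columns at `i` equals `(m+s−1)/w`, which is strictly less than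
`2·max(m, s)/w`. -/
theorem band_intersection_probability
    (w s m : ℕ) [NeZero w] (hs : 0 < s) (hm : 0 < m) (hwid : m + s - 1 ≤ w)
    (i : ZMod w) :
    (PMF.uniformOfFintype (ZMod w)).toOuterMeasure
        {x : ZMod w | (cycInterval s x ∩ cycInterval m i).Nonempty}
      = ((m + s - 1 : ℕ) : ENNReal) / ((w : ℕ) : ENNReal)
    ∧ ((m + s - 1 : ℕ) : ENNReal) / ((w : ℕ) : ENNReal)
      < ((2 * max m s : ℕ) : ENNReal) / ((w : ℕ) : ENNReal) := by
  constructor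
  · rw [band_set_eq hs hm i, PMF.toOuterMeasure_uniformOfFintype_apply]
    simp only [Finset.coe_sort_coe, Fintype.card_coe, card_cycInterval hwid, ZMod.card]
  · have hw0 : ((w : ℕ) : ENNReal) ≠ 0 := by
      exact_mod_cast Nat.cast_ne_zero.2 (NeZero.ne w)
    have hwt : ((w : ℕ) : ENNReal) ≠ ⊤ := ENNReal.natCast_ne_top w
    rw [div_eq_mul_inv, div_eq_mul_inv,
      ENNReal.mul_lt_mul_iff_left (ENNReal.inv_ne_zero.2 hwt) (ENNReal.inv_ne_top.2 hw0)]
    exact_mod_cast (by omega : m + s - 1 < 2 * max m s)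
end

section
/- Let N, κ, B be natural numbers with κ ≤ N, let C be a finite nonempty linearly ordered type, and let x, x' be images such that x' differs from x only on pixels whose band index lies in a fixed set A ⊆ Fin N with |A| ≤ B. Let f be a κ-band base classifier with counts n_c(x) and smoothed classifier g. If some class c satisfies n_c(x) ≥ max_{c' ≠ c} ( n_{c'}(x) + [c > c'] ) + 2·( C(N, κ) − C(N − B, κ) ), where [c > c'] equals 1 if c > c' and 0 otherwise and C(·,·) is the binomial coefficient, then g(x') = c. (Multi-band de-randomized smoothing certificate from the appendix.) -/
/-- **Multi-band de-randomized smoothing certificate.** Images are maps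
`Fin N × I → P` (band index, within-band position). The base classifier uses a
`κ`-element set of bands, and the adversary may only modify pixels whose band index
lies in a set `A` with `|A| ≤ B`; at most `C(N,κ) − C(N−B,κ)` of the base
classifications can be affected. -/
theorem multiband_smoothing_certificate
    (N κ B : ℕ) (hκ : κ ≤ N)
    (P : Type*) (I : Type*) (C : Type*) [Fintype C] [LinearOrder C] [Nonempty C]
    (f : (Fin N × I → P) → {T : Finset (Fin N) // T.card = κ} → C → Bool)
    (hf : ∀ (x x' : Fin N × I → P) (T : {T : Finset (Fin N) // T.card = κ}),
      (∀ p : Fin N × I, p.1 ∈ T.1 → x p = x' p) → ∀ c, f x T c = f x' T c)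
    (x : Fin N × I → P) (c : C)
    (hcert : ∀ c' ≠ c,
      (Finset.univ.filter fun T : {T : Finset (Fin N) // T.card = κ} =>
            f x T c' = true).card
          + (if c' < c then 1 else 0)
          + 2 * (Nat.choose N κ - Nat.choose (N - B) κ)
        ≤ (Finset.univ.filter fun T : {T : Finset (Fin N) // T.card = κ} =>
            f x T c = true).card)
    (A : Finset (Fin N)) (hA : A.card ≤ B)
    (x' : Fin N × I → P)
    (hpatch : ∀ p : Fin N × I, p.1 ∉ A → x' p = x p) :
    smoothed
        (fun c0 => (Finset.univ.filter fun T : {T : Finset (Fin N) // T.card = κ} =>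
          f x' T c0 = true).card) = c := by
  classical
  set n : C → ℕ := fun c0 =>
    (Finset.univ.filter fun T : {T : Finset (Fin N) // T.card = κ} =>
      f x T c0 = true).card with hn
  set n' : C → ℕ := fun c0 =>
    (Finset.univ.filter fun T : {T : Finset (Fin N) // T.card = κ} =>
      f x' T c0 = true).card with hn'
  set Δ := N.choose κ - (N - B).choose κ with hΔ
  -- base classifications agree on T disjoint from A
  have hsame : ∀ (T : {T : Finset (Fin N) // T.card = κ}), Disjoint T.1 A →
      ∀ c0, f x T c0 = f x' T c0 := by
    intro T hT c0
    apply hf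
    intro p hp
    exact (hpatch p (Finset.disjoint_left.mp hT hp)).symm
  -- cardinality of the set of affected T
  set S : Finset {T : Finset (Fin N) // T.card = κ} :=
    Finset.univ.filter fun T => ¬ Disjoint T.1 A with hS
  have htotal : (Finset.univ : Finset {T : Finset (Fin N) // T.card = κ}).card
      = N.choose κ := by
    rw [Finset.card_univ, Fintype.card_finset_len, Fintype.card_fin]
  have hdisj : (Finset.univ.filter
      fun T : {T : Finset (Fin N) // T.card = κ} => Disjoint T.1 A).card
      = (N - A.card).choose κ := by
    have hAc : Aᶜ.card = N - A.card := by
      rw [Finset.card_compl, Fintype.card_fin]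
    rw [← hAc, ← Finset.card_powersetCard κ Aᶜ]
    apply Finset.card_bij (fun T _ => T.1)
    · intro T hT
      simp only [Finset.mem_filter, Finset.mem_univ, true_and] at hT
      rw [Finset.mem_powersetCard]
      refine ⟨fun a ha => ?_, T.2⟩
      simp only [Finset.mem_compl]
      exact Finset.disjoint_left.mp hT ha
    · intro T₁ h₁ T₂ h₂ h
      exact Subtype.ext h
    · intro s hs
      rw [Finset.mem_powersetCard] at hs
      refine ⟨⟨s, hs.2⟩, ?_, rfl⟩
      simp only [Finset.mem_filter, Finset.mem_univ, true_and]
      rw [Finset.disjoint_left]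
      intro a ha haA
      have := hs.1 ha
      simp at this
      exact this haA
  have hScard : S.card ≤ Δ := by
    have hsplit : (N - A.card).choose κ + S.card = N.choose κ := by
      rw [← htotal, ← hdisj, hS]
      simpa using Finset.card_filter_add_card_filter_not
        (s := (Finset.univ : Finset {T : Finset (Fin N) // T.card = κ}))
        (p := fun T => Disjoint T.1 A)
    have h1 : (N - B).choose κ ≤ (N - A.card).choose κ :=
      Nat.choose_le_choose κ (Nat.sub_le_sub_left hA N)
    omega
  -- closeness of counts
  have hclose : ∀ c0, n' c0 ≤ n c0 + Δ ∧ n c0 ≤ n' c0 + Δ := by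
    intro c0
    constructor
    · calc n' c0 ≤ ((Finset.univ.filter
            fun T : {T : Finset (Fin N) // T.card = κ} => f x T c0 = true) ∪ S).card := by
            apply Finset.card_le_card
            intro T hT
            simp only [Finset.mem_filter, Finset.mem_univ, true_and, hn'] at hT
            simp only [Finset.mem_union, Finset.mem_filter, Finset.mem_univ, true_and, hS]
            by_cases hd : Disjoint T.1 A
            · exact Or.inl ((hsame T hd c0).trans hT)
            · exact Or.inr hd
        _ ≤ n c0 + S.card := Finset.card_union_le _ _
        _ ≤ n c0 + Δ := by omega
    · calc n c0 ≤ ((Finset.univ.filter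
            fun T : {T : Finset (Fin N) // T.card = κ} => f x' T c0 = true) ∪ S).card := by
            apply Finset.card_le_card
            intro T hT
            simp only [Finset.mem_filter, Finset.mem_univ, true_and, hn] at hT
            simp only [Finset.mem_union, Finset.mem_filter, Finset.mem_univ, true_and, hS]
            by_cases hd : Disjoint T.1 A
            · exact Or.inl ((hsame T hd c0).symm.trans hT)
            · exact Or.inr hd
        _ ≤ n' c0 + S.card := Finset.card_union_le _ _
        _ ≤ n' c0 + Δ := by omega
  -- the key comparison on n'
  have hkey : ∀ c' ≠ c, n' c' + (if c' < c then 1 else 0) ≤ n' c := by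
    intro c' hc'
    have h1 : n c' + (if c' < c then 1 else 0) + 2 * Δ ≤ n c := hcert c' hc'
    obtain ⟨h2, -⟩ := hclose c'
    obtain ⟨-, h3⟩ := hclose c
    omega
  have hcmem : c ∈ Finset.univ.filter fun c0 => ∀ c'', n' c'' ≤ n' c0 := by
    simp only [Finset.mem_filter, Finset.mem_univ, true_and]
    intro c''
    by_cases h : c'' = c
    · subst h; rfl
    · have := hkey c'' h; omega
  show smoothed n' = c
  unfold smoothed
  apply le_antisymm
  · exact Finset.min'_le _ _ hcmem
  · apply Finset.le_min'
    intro b hb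
    by_contra hbc
    push_neg at hbc
    simp only [Finset.mem_filter, Finset.mem_univ, true_and] at hb
    have h1 := hb c
    have h2 := hkey b (ne_of_lt hbc)
    simp [hbc] at h2
    omega
end

section
/- Let (Ω, μ) be a probability space, C a type of class labels, F, F' : Ω → C functions with {ω : F ω = c} and {ω : F' ω = c'} measurable for all classes, and E a measurable set with μ(E) ≤ Δ such that F ω = F' ω for all ω ∉ E. If μ{ω : F ω = c} > 1/2 + Δ for some class c, then μ{ω : F' ω = c} > 1/2, and consequently μ{ω : F' ω = c'} < μ{ω : F' ω = c} for every class c' ≠ c. (Randomized-smoothing majority certificate of Section 2.1: if the base classifier returns c with probability greater than 0.5 + Δ on x, the smoothed classification at any patch-perturbed x' is still c.) -/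
open MeasureTheory

/-- **Randomized-smoothing majority certificate (Section 2.1).** If the base classifier
`F` on the clean input returns class `c` with probability greater than `1/2 + Δ`, and
the base classifications at the clean and perturbed inputs agree outside an event `E`
of probability at most `Δ`, then the perturbed base classifier `F'` returns `c` with
probability greater than `1/2`, hence `c` remains the (strict) plurality class. -/
theorem randomized_smoothing_majority_certificate
    {Ω : Type*} [MeasurableSpace Ω] (μ : Measure Ω) [IsProbabilityMeasure μ]
    {C : Type*} (F F' : Ω → C)
    (hF : ∀ c : C, MeasurableSet {ω | F ω = c})
    (hF' : ∀ c : C, MeasurableSet {ω | F' ω = c})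
    (E : Set Ω) (hE : MeasurableSet E) (Δ : ENNReal) (hEΔ : μ E ≤ Δ)
    (hagree : ∀ ω ∉ E, F ω = F' ω)
    (c : C) (hc : μ {ω | F ω = c} > 1 / 2 + Δ) :
    μ {ω | F' ω = c} > 1 / 2 ∧
      ∀ c' ≠ c, μ {ω | F' ω = c'} < μ {ω | F' ω = c} := by
  have hΔfin : Δ ≠ ⊤ := fun h => by simp [h] at hc
  have hsub : {ω | F ω = c} ⊆ {ω | F' ω = c} ∪ E := by
    intro ω hω
    by_cases hωE : ω ∈ E
    · exact Or.inr hωE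
    · exact Or.inl (by rw [Set.mem_setOf_eq, ← hagree ω hωE]; exact hω)
  have h1 : μ {ω | F ω = c} ≤ μ {ω | F' ω = c} + Δ :=
    (measure_mono hsub).trans ((measure_union_le _ _).trans (by gcongr))
  have hmain : μ {ω | F' ω = c} > 1 / 2 := by
    have := hc.trans_le h1
    exact (ENNReal.add_lt_add_iff_right hΔfin).mp this
  refine ⟨hmain, fun c' hc' => ?_⟩
  have hdisj : Disjoint {ω | F' ω = c'} {ω | F' ω = c} := by
    rw [Set.disjoint_left]
    intro ω h1 h2
    exact hc' (h1.symm ▸ h2 ▸ rfl)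
  have hsum : μ {ω | F' ω = c'} + μ {ω | F' ω = c} ≤ 1 := by
    rw [← measure_union hdisj (hF' c)]
    exact measure_mono (Set.subset_univ _) |>.trans (by simp)
  have hc'lt : μ {ω | F' ω = c'} < 1 / 2 := by
    by_contra h
    push_neg at h
    have : (1 : ENNReal) / 2 + 1 / 2 < μ {ω | F' ω = c'} + μ {ω | F' ω = c} :=
      ENNReal.add_lt_add_of_le_of_lt (by norm_num) h hmain
    rw [ENNReal.add_halves] at this
    exact absurd hsum (not_le.mpr this)
  exact hc'lt.trans hmain
end

section
/- Let (Ω, μ) be a probability space, C a type of class labels, F, F' : Ω → C functions with {ω : F ω = c} measurable for all classes and likewise for F', and E a measurable set with μ(E) ≤ Δ such that F ω = F' ω for all ω ∉ E. If some class c satisfies μ{ω : F ω = c} > μ{ω : F ω = c'} + 2Δ for every class c' ≠ c, then μ{ω : F' ω = c} > μ{ω : F' ω = c'} for every class c' ≠ c, so c is the unique class maximizing the smoothed class probabilities at the perturbed input. (The less strict per-class gap condition p_c − p_{c'} > 2Δ of Section 2.3, available when class probabilities are computed exactly.) -/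
open MeasureTheory

/-- **Per-class gap certificate (Section 2.3).** If the base classifier `F` on the clean
input returns class `c` with probability exceeding that of every other class `c'` by
more than `2Δ`, and the base classifications at the clean and perturbed inputs agree
outside an event `E` of probability at most `Δ`, then `c` is the unique class maximizing
the smoothed class probabilities at the perturbed input. -/
theorem randomized_smoothing_gap_certificate
    {Ω : Type*} [MeasurableSpace Ω] (μ : Measure Ω) [IsProbabilityMeasure μ]
    {C : Type*} (F F' : Ω → C)
    (hF : ∀ c : C, MeasurableSet {ω | F ω = c})
    (hF' : ∀ c : C, MeasurableSet {ω | F' ω = c})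
    (E : Set Ω) (hE : MeasurableSet E) (Δ : ENNReal) (hEΔ : μ E ≤ Δ)
    (hagree : ∀ ω ∉ E, F ω = F' ω)
    (c : C) (hc : ∀ c' ≠ c, μ {ω | F ω = c} > μ {ω | F ω = c'} + 2 * Δ) :
    ∀ c' ≠ c, μ {ω | F' ω = c'} < μ {ω | F' ω = c} := by
  intro c' hc'
  have gap := hc c' hc'
  -- Δ is finite
  have hΔ : Δ ≠ ⊤ := by
    intro h
    have : (2 : ENNReal) * Δ = ⊤ := by simp [h]
    have h1 : μ {ω | F ω = c'} + 2 * Δ = ⊤ := by simp [this]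
    rw [h1] at gap
    exact (not_top_lt gap)
  -- transfer lemma
  have key : ∀ d : C, μ {ω | F' ω = d} ≤ μ {ω | F ω = d} + Δ ∧
      μ {ω | F ω = d} ≤ μ {ω | F' ω = d} + Δ := by
    intro d
    constructor
    · calc μ {ω | F' ω = d} ≤ μ ({ω | F ω = d} ∪ E) := by
            apply measure_mono
            intro ω hω
            by_cases hmem : ω ∈ E
            · exact Or.inr hmem
            · exact Or.inl (by simpa [hagree ω hmem] using hω)
      _ ≤ μ {ω | F ω = d} + μ E := measure_union_le _ _
      _ ≤ μ {ω | F ω = d} + Δ := add_le_add le_rfl hEΔ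
    · calc μ {ω | F ω = d} ≤ μ ({ω | F' ω = d} ∪ E) := by
            apply measure_mono
            intro ω hω
            by_cases hmem : ω ∈ E
            · exact Or.inr hmem
            · exact Or.inl (by simpa [← hagree ω hmem] using hω)
      _ ≤ μ {ω | F' ω = d} + μ E := measure_union_le _ _
      _ ≤ μ {ω | F' ω = d} + Δ := add_le_add le_rfl hEΔ
  have h1 := (key c').1
  have h2 := (key c).2
  have step : μ {ω | F ω = c'} + 2 * Δ < μ {ω | F' ω = c} + Δ := lt_of_lt_of_le gap h2
  have step2 : μ {ω | F ω = c'} + Δ + Δ < μ {ω | F' ω = c} + Δ := by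
    rw [add_assoc, ← two_mul]; exact step
  have step3 : μ {ω | F ω = c'} + Δ < μ {ω | F' ω = c} :=
    (ENNReal.add_lt_add_iff_right hΔ).mp step2
  exact lt_of_le_of_lt h1 step3
end
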